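/- Let P₁,…,P_t be complex matrices with P_b ∈ C^{n_b×n_{b+1}} [Δ_b]-stable on Δ_{b+1}, where Δ₁ is the trivial one-block partition (⟨n₁⟩) and Δ_{t+1} is the partition of ⟨n_{t+1}⟩ whose blocks are the singletons {j}, j ∈ K, together with K^c (for a fixed nonempty K ⊆ ⟨n_{t+1}⟩). Then the submatrix (P₁P₂⋯P_t)^K consisting of the columns indexed by K has all its rows identical. -/

import Mathlib

/-- Product `M 0 * M 1 * ⋯ * M (t-1)` of a chain of composable complex matrices. -/
noncomputable def chainProd : ∀ (t : ℕ) (τ : Fin (t + 1) → Type) [∀ i, Fintype (τ i)]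
    [∀ i, DecidableEq (τ i)]
    (_ : ∀ b : Fin t, Matrix (τ b.castSucc) (τ b.succ) ℂ),
    Matrix (τ 0) (τ (Fin.last t)) ℂ
  | 0, τ, _, _, _ => (1 : Matrix (τ 0) (τ 0) ℂ)
  | (t + 1), τ, _, _, M =>
      M 0 * chainProd t (fun i => τ i.succ) (fun b => M b.succ)

/-- `P` is `[Δ]`-stable on `Sg`. -/
def IsStableOn {m n : ℕ} (P : Matrix (Fin m) (Fin n) ℂ)
    (Δ : Finpartition (Finset.univ : Finset (Fin m)))
    (Sg : Finpartition (Finset.univ : Finset (Fin n))) : Prop :=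
  ∀ K ∈ Δ.parts, ∀ L ∈ Sg.parts, ∀ i ∈ K, ∀ i' ∈ K,
    ∑ j ∈ L, P i j = ∑ j ∈ L, P i' j

/-- if each `P b` is `[Δ_b]`-stable on `Δ_{b+1}`, `Δ₁ = (⟨n₁⟩)` is the trivial
one-block partition, and `Δ_{t+1} = ({j}, Kᶜ)_{j∈K}` (singletons of a nonempty set `K`
together with its complement if nonempty), then the column submatrix `(P₁⋯P_t)^K`
has all its rows identical. -/
lemma isStableOn_one {n : ℕ} (Δ : Finpartition (Finset.univ : Finset (Fin n))) :
    IsStableOn 1 Δ Δ := by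
  intro K hK L hL i hi i' hi'
  have h1 : ∀ a ∈ K, (∑ j ∈ L, (1 : Matrix (Fin n) (Fin n) ℂ) a j) =
      if K = L then 1 else 0 := by
    intro a ha
    simp only [Matrix.one_apply]
    rw [Finset.sum_ite_eq L a (fun _ => (1:ℂ))]
    by_cases h : a ∈ L
    · rw [if_pos h, if_pos (Δ.eq_of_mem_parts hK hL ha h)]
    · rw [if_neg h, if_neg]
      rintro rfl; exact h ha
  rw [h1 i hi, h1 i' hi']

lemma isStableOn_mul {m n p : ℕ} (P : Matrix (Fin m) (Fin n) ℂ)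
    (Q : Matrix (Fin n) (Fin p) ℂ)
    (Δ : Finpartition (Finset.univ : Finset (Fin m)))
    (Sg : Finpartition (Finset.univ : Finset (Fin n)))
    (Θ : Finpartition (Finset.univ : Finset (Fin p)))
    (hP : IsStableOn P Δ Sg) (hQ : IsStableOn Q Sg Θ) :
    IsStableOn (P * Q) Δ Θ := by
  intro K hK L hL i hi i' hi'
  have key : ∀ a : Fin m, a ∈ K → (∑ j ∈ L, (P * Q) a j) =
      ∑ M ∈ Sg.parts.attach, (∑ k ∈ (M : Finset (Fin n)),
        P a k) * (∑ j ∈ L, Q ((Sg.nonempty_of_mem_parts M.2).choose) j) := by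
    intro a _
    simp only [Matrix.mul_apply]
    rw [Finset.sum_comm]
    have : (∑ k : Fin n, ∑ j ∈ L, P a k * Q k j) =
        ∑ k : Fin n, P a k * (∑ j ∈ L, Q k j) := by
      simp [Finset.mul_sum]
    rw [this]
    have hsplit := Finset.sum_biUnion (s := Sg.parts) (t := id)
      (f := fun k => P a k * (∑ j ∈ L, Q k j))
      (fun x hx y hy hxy => Sg.disjoint hx hy hxy)
    rw [Sg.biUnion_parts] at hsplit
    rw [hsplit, ← Finset.sum_attach Sg.parts]
    refine Finset.sum_congr rfl ?_
    intro M _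
    rw [Finset.sum_mul]
    refine Finset.sum_congr rfl ?_
    intro k hk
    congr 1
    exact hQ _ M.2 _ hL _ hk _ (Sg.nonempty_of_mem_parts M.2).choose_spec
  rw [key i hi, key i' hi']
  refine Finset.sum_congr rfl ?_
  intro M _
  congr 1
  exact hP _ hK _ M.2 _ hi _ hi'

lemma chainProd_isStableOn : ∀ (t : ℕ) (n : Fin (t + 1) → ℕ)
    (Δ : ∀ i : Fin (t + 1), Finpartition (Finset.univ : Finset (Fin (n i))))
    (P : ∀ b : Fin t, Matrix (Fin (n b.castSucc)) (Fin (n b.succ)) ℂ),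
    (∀ b : Fin t, IsStableOn (P b) (Δ b.castSucc) (Δ b.succ)) →
    IsStableOn (chainProd t (fun i => Fin (n i)) P) (Δ 0) (Δ (Fin.last t))
  | 0, n, Δ, P, _ => isStableOn_one (Δ 0)
  | (t + 1), n, Δ, P, h => by
      have ih := chainProd_isStableOn t (fun i => n i.succ) (fun i => Δ i.succ)
        (fun b => P b.succ) (fun b => h b.succ)
      exact isStableOn_mul _ _ (Δ 0) (Δ ((0 : Fin (t+1)).succ)) (Δ (Fin.last (t+1)))
        (h 0) ih

theorem chainProd_columns_stable (t : ℕ) (ht : 2 ≤ t)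
    (n : Fin (t + 1) → ℕ)
    (Δ : ∀ i : Fin (t + 1), Finpartition (Finset.univ : Finset (Fin (n i))))
    (P : ∀ b : Fin t, Matrix (Fin (n b.castSucc)) (Fin (n b.succ)) ℂ)
    (hstab : ∀ b : Fin t, IsStableOn (P b) (Δ b.castSucc) (Δ b.succ))
    (hΔ₁ : (Δ 0).parts = {Finset.univ})
    (K : Finset (Fin (n (Fin.last t)))) (hK : K.Nonempty)
    (hΔlast : (Δ (Fin.last t)).parts =
      (K.image fun j => ({j} : Finset (Fin (n (Fin.last t))))) ∪
        (if Kᶜ = ∅ then ∅ else {Kᶜ})) :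
    ∀ j ∈ K, ∀ i i' : Fin (n 0),
      chainProd t (fun i => Fin (n i)) P i j =
      chainProd t (fun i => Fin (n i)) P i' j := by
  intro j hj i i'
  have hstable := chainProd_isStableOn t n Δ P hstab
  have hKuniv : (Finset.univ : Finset (Fin (n 0))) ∈ (Δ 0).parts := by
    rw [hΔ₁]; exact Finset.mem_singleton_self _
  have hL : ({j} : Finset (Fin (n (Fin.last t)))) ∈ (Δ (Fin.last t)).parts := by
    rw [hΔlast]
    exact Finset.mem_union_left _ (Finset.mem_image_of_mem _ hj)
  have := hstable _ hKuniv _ hL i (Finset.mem_univ i) i' (Finset.mem_univ i')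
  simpa using this
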